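/- arXiv:0906.0147 — 2 statements merged into one kernel-verified Lean document; each statement's English description precedes it below -/
import Mathlib

section
/- Let L be a frame with an antitone involution c satisfying x ⊔ xᶜ = ⊤, and ν : L → ℝ satisfy ν(⊥) = 0, modularity, continuity from below, and ν(a ⊓ aᶜ) = 0 for all a. If A is positive with ν(A) = sup{ν(P) : P positive}, then every positive element E ≤ Aᶜ satisfies ν(E) = 0. -/
open Filter Topology

theorem positive_below_compl_has_zero_measure {L : Type*} [Order.Frame L]
    (c : L → L)
    (hem : ∀ x : L, x ⊔ c x = ⊤)
    (hanti : ∀ x y : L, x ≤ y → c y ≤ c x)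
    (hinv : ∀ x : L, c (c x) = x)
    (ν : L → ℝ)
    (h0 : ν ⊥ = 0)
    (hmod : ∀ a b : L, ν (a ⊔ b) + ν (a ⊓ b) = ν a + ν b)
    (hcont : ∀ h : ℕ → L, Monotone h →
      Tendsto (fun n => ν (h n)) atTop (𝓝 (ν (⨆ n, h n))))
    (hnc : ∀ a : L, ν (a ⊓ c a) = 0)
    (A : L) (hA : ∀ e ≤ A, 0 ≤ ν e)
    (hAsup : ν A = sSup (ν '' {P : L | ∀ e ≤ P, 0 ≤ ν e})) :
    ∀ E : L, (∀ e ≤ E, 0 ≤ ν e) → E ≤ c A → ν E = 0 := by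
  -- monotonicity of ν within a positive element
  have mono : ∀ P : L, (∀ e ≤ P, 0 ≤ ν e) → ∀ x y : L, x ≤ y → y ≤ P → ν x ≤ ν y := by
    intro P hP x y hxy hyP
    have hy : x ⊔ (y ⊓ c x) = y := by
      rw [sup_inf_left, hem, inf_top_eq, sup_eq_right.2 hxy]
    have hx : x ⊓ (y ⊓ c x) = x ⊓ c x := by
      rw [← inf_assoc, inf_eq_left.2 hxy]
    have hm := hmod x (y ⊓ c x)
    rw [hy, hx, hnc x] at hm
    have hpos : 0 ≤ ν (y ⊓ c x) := hP _ (le_trans inf_le_left hyP)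
    linarith
  -- join of two positive elements is positive
  have join : ∀ P Q : L, (∀ e ≤ P, 0 ≤ ν e) → (∀ e ≤ Q, 0 ≤ ν e) →
      ∀ e ≤ P ⊔ Q, 0 ≤ ν e := by
    intro P Q hP hQ e he
    have hdec : (e ⊓ P) ⊔ (e ⊓ Q) = e := by
      rw [← inf_sup_left, inf_eq_left.2 he]
    have hm := hmod (e ⊓ P) (e ⊓ Q)
    rw [hdec] at hm
    have h1 : 0 ≤ ν (e ⊓ P) := hP _ inf_le_right
    have h2 : ν (e ⊓ P ⊓ (e ⊓ Q)) ≤ ν (e ⊓ Q) := by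
      exact mono Q hQ _ _ inf_le_right inf_le_right
    linarith
  -- the set of values on positive elements is bounded above
  have hbdd : BddAbove (ν '' {P : L | ∀ e ≤ P, 0 ≤ ν e}) := by
    by_contra hnb
    rw [not_bddAbove_iff] at hnb
    have hP : ∀ n : ℕ, ∃ P : L, (∀ e ≤ P, 0 ≤ ν e) ∧ (n : ℝ) < ν P := by
      intro n
      obtain ⟨r, ⟨P, hPpos, rfl⟩, hr⟩ := hnb (n : ℝ)
      exact ⟨P, hPpos, hr⟩
    choose P hPpos hPn using hP
    set Q : ℕ → L := fun n => Nat.rec (P 0) (fun k q => q ⊔ P (k + 1)) n with hQ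
    have hQsucc : ∀ n, Q (n + 1) = Q n ⊔ P (n + 1) := fun n => rfl
    have hQpos : ∀ n, ∀ e ≤ Q n, 0 ≤ ν e := by
      intro n
      induction n with
      | zero => exact hPpos 0
      | succ k ih => rw [hQsucc]; exact join _ _ ih (hPpos (k + 1))
    have hQmono : Monotone Q := by
      apply monotone_nat_of_le_succ
      intro n; rw [hQsucc]; exact le_sup_left
    have hPQ : ∀ n, P n ≤ Q n := by
      intro n
      cases n with
      | zero => exact le_rfl
      | succ k => rw [hQsucc]; exact le_sup_right
    set S : L := ⨆ n, Q n with hS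
    have hSpos : ∀ e ≤ S, 0 ≤ ν e := by
      intro e he
      have hdist : (⨆ n, e ⊓ Q n) = e := by
        rw [← inf_iSup_eq, inf_eq_left.2 he]
      have hmono' : Monotone fun n => e ⊓ Q n :=
        fun i j hij => inf_le_inf_left e (hQmono hij)
      have ht := hcont (fun n => e ⊓ Q n) hmono'
      rw [hdist] at ht
      exact ge_of_tendsto' ht fun n => hQpos n _ inf_le_right
    obtain ⟨n, hn⟩ := exists_nat_gt (ν S)
    have h1 : ν (P n) ≤ ν (Q n) := mono _ (hQpos n) _ _ (hPQ n) le_rfl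
    have h2 : ν (Q n) ≤ ν S := mono _ hSpos _ _ (le_iSup Q n) le_rfl
    have h3 := hPn n
    linarith
  intro E hE hEA
  have hEpos : 0 ≤ ν E := hE E le_rfl
  have hjoin : ∀ e ≤ A ⊔ E, 0 ≤ ν e := join A E hA hE
  have hle : ν (A ⊔ E) ≤ ν A := by
    rw [hAsup]
    exact le_csSup hbdd ⟨A ⊔ E, hjoin, rfl⟩
  have hm := hmod A E
  have hAE : ν (A ⊓ E) ≤ ν (A ⊓ c A) :=
    mono A hA _ _ (inf_le_inf_left A hEA) inf_le_left
  have := hnc A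
  linarith
end

section
/- (Lattice Hahn decomposition) Let L be a frame with an antitone involution c satisfying x ⊔ xᶜ = ⊤ and ν(x ⊓ xᶜ) = 0, and let ν : L → ℝ be a finite signed lattice measure (ν(⊥) = 0, modular, continuous from below, monotone on nonnegative-measure elements and reverse-monotone on nonpositive-measure elements) such that every element e with 0 < ν(e) contains a positive sub-element of strictly positive measure. Then there exist A, B ∈ L with A ⊔ B = ⊤, ν(A ⊓ B) = 0, A positive (all sub-elements have ν ≥ 0), and B negative (all sub-elements have ν ≤ 0). -/
open Filter Topology

theorem lattice_hahn_decomposition {L : Type*} [Order.Frame L]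
    (c : L → L)
    (hem : ∀ x : L, x ⊔ c x = ⊤)
    (hanti : ∀ x y : L, x ≤ y → c y ≤ c x)
    (hinv : ∀ x : L, c (c x) = x)
    (ν : L → ℝ)
    (h0 : ν ⊥ = 0)
    (hmono : ∀ a b : L, 0 ≤ ν a → 0 ≤ ν b → a ≤ b → ν a ≤ ν b)
    (hantimono : ∀ a b : L, ν a ≤ 0 → ν b ≤ 0 → a ≤ b → ν b ≤ ν a)
    (hmod : ∀ a b : L, ν (a ⊔ b) + ν (a ⊓ b) = ν a + ν b)
    (hcont : ∀ h : ℕ → L, Monotone h →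
      Tendsto (fun n => ν (h n)) atTop (𝓝 (ν (⨆ n, h n))))
    (hnc : ∀ x : L, ν (x ⊓ c x) = 0)
    (hsub : ∀ e : L, 0 < ν e →
      ∃ a ≤ e, (∀ f ≤ a, 0 ≤ ν f) ∧ 0 < ν a) :
    ∃ A B : L, A ⊔ B = ⊤ ∧ ν (A ⊓ B) = 0 ∧
      (∀ e ≤ A, 0 ≤ ν e) ∧ (∀ e ≤ B, ν e ≤ 0) := by
  set P : L → Prop := fun x => ∀ f ≤ x, 0 ≤ ν f with hPdef
  have hPle : ∀ x, P x → 0 ≤ ν x := fun x hx => hx x le_rfl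
  -- join of two positive elements is positive
  have hjoin : ∀ a b : L, P a → P b → P (a ⊔ b) := by
    intro a b ha hb f hf
    have hfd : (f ⊓ a) ⊔ (f ⊓ b) = f := by
      rw [← inf_sup_left, inf_eq_left.mpr hf]
    have hm := hmod (f ⊓ a) (f ⊓ b)
    rw [hfd] at hm
    have h1 : (f ⊓ a) ⊓ (f ⊓ b) ≤ f ⊓ b := inf_le_right
    have h2 : ν ((f ⊓ a) ⊓ (f ⊓ b)) ≤ ν (f ⊓ b) :=
      hmono _ _ (hb _ (inf_le_right.trans inf_le_right)) (hb _ inf_le_right) h1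
    have h3 : 0 ≤ ν (f ⊓ a) := ha _ inf_le_right
    linarith
  -- sup of a monotone sequence of positive elements is positive
  have hsupP : ∀ h : ℕ → L, Monotone h → (∀ n, P (h n)) → P (⨆ n, h n) := by
    intro h hmon hpos f hf
    have hfd : f = ⨆ n, f ⊓ h n := by
      rw [← inf_iSup_eq, inf_eq_left.mpr hf]
    have hmon' : Monotone fun n => f ⊓ h n :=
      fun m n hmn => inf_le_inf_left f (hmon hmn)
    have ht := hcont (fun n => f ⊓ h n) hmon'
    rw [← hfd] at ht
    exact ge_of_tendsto' ht (fun n => hpos n _ inf_le_right)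
  -- for any sequence of positive elements there is a positive dominating element
  have hbig : ∀ a : ℕ → L, (∀ n, P (a n)) →
      ∃ A : L, P A ∧ ∀ n, ν (a n) ≤ ν A := by
    intro a ha
    set b : ℕ → L := fun n => partialSups a n with hbdef
    have hbP : ∀ n, P (b n) := by
      intro n
      induction n with
      | zero => simpa [hbdef] using ha 0
      | succ k ih =>
        have : b (k + 1) = b k ⊔ a (k + 1) := by simp [hbdef, partialSups_succ]
        rw [this]
        exact hjoin _ _ ih (ha (k + 1))
    have hbmon : Monotone b := (partialSups a).monotone
    refine ⟨⨆ n, b n, hsupP b hbmon hbP, fun n => ?_⟩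
    have hab : ν (a n) ≤ ν (b n) :=
      hmono _ _ (hPle _ (ha n)) (hPle _ (hbP n)) (le_partialSups a n)
    have hνmon : Monotone fun n => ν (b n) :=
      fun m k hmk => hmono _ _ (hPle _ (hbP m)) (hPle _ (hbP k)) (hbmon hmk)
    have := hνmon.ge_of_tendsto (hcont b hbmon) n
    linarith
  -- the set of values of ν on positive elements
  set S : Set ℝ := ν '' {x | P x} with hSdef
  have hSne : S.Nonempty := ⟨ν ⊥, ⟨⊥, fun f hf => by rw [le_bot_iff.mp hf, h0], rfl⟩⟩
  have hSbdd : BddAbove S := by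
    by_contra hnb
    rw [not_bddAbove_iff] at hnb
    have hch : ∀ n : ℕ, ∃ a : L, P a ∧ (n : ℝ) < ν a := by
      intro n
      obtain ⟨y, ⟨x, hx, rfl⟩, hy⟩ := hnb (n : ℝ)
      exact ⟨x, hx, hy⟩
    choose a haP haν using hch
    obtain ⟨A, hAP, hAdom⟩ := hbig a haP
    obtain ⟨n, hn⟩ := exists_nat_gt (ν A)
    exact absurd ((haν n).trans_le (hAdom n)) (not_lt.mpr hn.le)
  set s : ℝ := sSup S with hsdef
  have hch : ∀ n : ℕ, ∃ a : L, P a ∧ s - 1 / (n + 1) < ν a := by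
    intro n
    have hlt : s - 1 / (n + 1) < s := by
      have : (0 : ℝ) < 1 / (n + 1) := by positivity
      linarith
    obtain ⟨y, ⟨x, hx, rfl⟩, hy⟩ := exists_lt_of_lt_csSup hSne hlt
    exact ⟨x, hx, hy⟩
  choose a haP haν using hch
  obtain ⟨A, hAP, hAdom⟩ := hbig a haP
  have hAle : ν A ≤ s := le_csSup hSbdd ⟨A, hAP, rfl⟩
  have hAge : s ≤ ν A := by
    apply le_of_forall_pos_le_add
    intro ε hε
    obtain ⟨n, hn⟩ := exists_nat_one_div_lt hε
    have h1 := haν n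
    have h2 := hAdom n
    have : s - 1 / (n + 1) < ν A := lt_of_lt_of_le h1 h2
    have : s < ν A + 1 / (n + 1) := by linarith
    linarith [this.trans_le (by linarith [hn.le] : ν A + 1 / (n + 1) ≤ ν A + ε)]
  have hAs : ν A = s := le_antisymm hAle hAge
  refine ⟨A, c A, hem A, hnc A, hAP, ?_⟩
  intro e he
  by_contra hpos
  push_neg at hpos
  obtain ⟨x, hxe, hxP, hxν⟩ := hsub e hpos
  have hxcA : x ≤ c A := hxe.trans he
  have hAxP : P (A ⊔ x) := hjoin A x hAP hxP
  have hinfz : ν (A ⊓ x) = 0 := by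
    have hle : A ⊓ x ≤ A ⊓ c A := inf_le_inf_left A hxcA
    have h1 : 0 ≤ ν (A ⊓ x) := hAP _ inf_le_left
    have h2 : ν (A ⊓ x) ≤ ν (A ⊓ c A) :=
      hmono _ _ h1 (by rw [hnc A]) hle
    rw [hnc A] at h2
    linarith
  have hm := hmod A x
  rw [hinfz] at hm
  have hgt : s < ν (A ⊔ x) := by rw [← hAs] at *; linarith
  have hle2 : ν (A ⊔ x) ≤ s := le_csSup hSbdd ⟨A ⊔ x, hAxP, rfl⟩
  linarith
end
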